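/- arXiv:1206.1342 — 2 statements merged into one kernel-verified Lean document; each statement's English description precedes it below -/
import Mathlib

section
/- Let a, b be distinct positive real numbers, m ∈ ℝ, and κ ∈ ℝ. Then the Euclidean ray {w ∈ H² : Re(w) = κ·Im(w)} through the origin meets the square hyperbola S_m(aI, bI) in at most one point; that is, if w, w' ∈ H² satisfy Re(w) = κ·Im(w), Re(w') = κ·Im(w'), d(w,aI)² − d(w,bI)² = m, and d(w',aI)² − d(w',bI)² = m, then w = w'. -/
open UpperHalfPlane

noncomputable section

/-- The point of the upper half-plane with complex coordinate `a·i`, for `a > 0`. -/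
def ptI (a : ℝ) (ha : 0 < a) : UpperHalfPlane := ⟨a * Complex.I, by simpa using ha⟩

namespace RayHyp

open Real


def g (c x : ℝ) : ℝ := (2 * arsinh (√((c * cosh x - 1) / 2))) ^ 2

def φ (c x : ℝ) : ℝ := 4 * c * arsinh (√((c * cosh x - 1) / 2)) * sinh x / √(c ^ 2 * cosh x ^ 2 - 1)

lemma g_hasDerivAt (c : ℝ) (hc : 1 < c) (x : ℝ) : HasDerivAt (g c) (φ c x) x := by
  have hv : 0 < (c * cosh x - 1) / 2 := by nlinarith [Real.one_le_cosh x]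
  have h1 : HasDerivAt (fun x => (c * cosh x - 1) / 2) (c * sinh x / 2) x :=
    (((Real.hasDerivAt_cosh x).const_mul c).sub_const 1).div_const 2
  have h2 := h1.sqrt hv.ne'
  have h3 := (Real.hasDerivAt_arsinh (√((c * cosh x - 1) / 2))).comp x h2
  have h4 : HasDerivAt (g c) _ x := (h3.const_mul 2).pow 2
  convert h4 using 1
  have hu2 : √((c * cosh x - 1) / 2) ^ 2 = (c * cosh x - 1) / 2 := Real.sq_sqrt hv.le
  have hW : c ^ 2 * cosh x ^ 2 - 1
      = (2 * (√((c * cosh x - 1) / 2)) * √(1 + (c * cosh x - 1) / 2)) ^ 2 := by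
    rw [mul_pow, mul_pow, Real.sq_sqrt hv.le, Real.sq_sqrt (by linarith)]
    ring
  have hWs : √(c ^ 2 * cosh x ^ 2 - 1)
      = 2 * (√((c * cosh x - 1) / 2)) * √(1 + (c * cosh x - 1) / 2) := by
    rw [hW, Real.sqrt_sq (by positivity)]
  have hvpos : 0 < √((c * cosh x - 1) / 2) := Real.sqrt_pos.2 hv
  have h1v : 0 < √(1 + (c * cosh x - 1) / 2) := Real.sqrt_pos.2 (by linarith)
  rw [φ, hWs, hu2]
  field_simp
  ring_nf
  rw [Function.comp_apply]
  ring

lemma φ_odd (c x : ℝ) : φ c (-x) = -φ c x := by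
  rw [φ, φ, Real.cosh_neg, Real.sinh_neg]
  ring

lemma φ_strictMonoOn (c : ℝ) (hc : 1 < c) : StrictMonoOn (φ c) (Set.Ici 0) := by
  intro x hx y hy hxy
  simp only [Set.mem_Ici] at hx hy
  have hcx : (1:ℝ) ≤ cosh x := Real.one_le_cosh x
  have hcy : (1:ℝ) ≤ cosh y := Real.one_le_cosh y
  have hccx : 1 < c * cosh x := by nlinarith
  have hccy : 1 < c * cosh y := by nlinarith
  have hWx : 0 < c ^ 2 * cosh x ^ 2 - 1 := by nlinarith
  have hWy : 0 < c ^ 2 * cosh y ^ 2 - 1 := by nlinarith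
  have hsx : 0 ≤ sinh x := by
    have := Real.sinh_le_sinh.2 hx
    simpa using this
  have hsxy : sinh x < sinh y := Real.sinh_lt_sinh.2 hxy
  have hcoshle : cosh x ≤ cosh y := by
    rw [Real.cosh_le_cosh, abs_of_nonneg hx, abs_of_nonneg (le_of_lt (lt_of_le_of_lt hx hxy))]
    exact hxy.le
  -- A := 4 * c * arsinh (√((c * cosh · - 1)/2)), B := sinh · / √(c²cosh·²-1); φ = A * B
  have hAx : 0 < 4 * c * arsinh (√((c * cosh x - 1) / 2)) := by
    have h0 : 0 < √((c * cosh x - 1) / 2) := Real.sqrt_pos.2 (by nlinarith)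
    have h1 : arsinh 0 < arsinh (√((c * cosh x - 1) / 2)) := Real.arsinh_lt_arsinh.2 h0
    rw [Real.arsinh_zero] at h1
    positivity
  have hAle : 4 * c * arsinh (√((c * cosh x - 1) / 2))
      ≤ 4 * c * arsinh (√((c * cosh y - 1) / 2)) := by
    have h1 : √((c * cosh x - 1) / 2) ≤ √((c * cosh y - 1) / 2) := by
      apply Real.sqrt_le_sqrt; nlinarith
    have := Real.arsinh_le_arsinh.2 h1
    nlinarith
  have hB : sinh x / √(c ^ 2 * cosh x ^ 2 - 1) < sinh y / √(c ^ 2 * cosh y ^ 2 - 1) := by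
    rw [div_lt_div_iff₀ (Real.sqrt_pos.2 hWx) (Real.sqrt_pos.2 hWy)]
    have hsqx : √(c ^ 2 * cosh x ^ 2 - 1) ^ 2 = c ^ 2 * cosh x ^ 2 - 1 := Real.sq_sqrt hWx.le
    have hsqy : √(c ^ 2 * cosh y ^ 2 - 1) ^ 2 = c ^ 2 * cosh y ^ 2 - 1 := Real.sq_sqrt hWy.le
    have hrhs : 0 ≤ sinh y * √(c ^ 2 * cosh x ^ 2 - 1) := by positivity
    refine lt_of_pow_lt_pow_left₀ 2 hrhs ?_
    rw [mul_pow, mul_pow, hsqx, hsqy]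
    have e1 : cosh x ^ 2 = sinh x ^ 2 + 1 := Real.cosh_sq x
    have e2 : cosh y ^ 2 = sinh y ^ 2 + 1 := Real.cosh_sq y
    rw [e1, e2]
    have hN : sinh x ^ 2 < sinh y ^ 2 := by nlinarith
    have hpos : 0 < (c ^ 2 - 1) * (sinh y ^ 2 - sinh x ^ 2) :=
      mul_pos (by nlinarith) (by linarith)
    nlinarith [hpos]
  have hBx : 0 ≤ sinh x / √(c ^ 2 * cosh x ^ 2 - 1) := by positivity
  have key : (4 * c * arsinh (√((c * cosh x - 1) / 2))) * (sinh x / √(c ^ 2 * cosh x ^ 2 - 1))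
      < (4 * c * arsinh (√((c * cosh y - 1) / 2))) * (sinh y / √(c ^ 2 * cosh y ^ 2 - 1)) := by
    calc (4 * c * arsinh (√((c * cosh x - 1) / 2))) * (sinh x / √(c ^ 2 * cosh x ^ 2 - 1))
        ≤ (4 * c * arsinh (√((c * cosh y - 1) / 2))) * (sinh x / √(c ^ 2 * cosh x ^ 2 - 1)) :=
          mul_le_mul_of_nonneg_right hAle hBx
      _ < _ := by
          apply mul_lt_mul_of_pos_left hB
          exact lt_of_lt_of_le hAx hAle
  calc φ c x = (4 * c * arsinh (√((c * cosh x - 1) / 2))) * (sinh x / √(c ^ 2 * cosh x ^ 2 - 1)) := by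
        rw [φ]; ring
    _ < (4 * c * arsinh (√((c * cosh y - 1) / 2))) * (sinh y / √(c ^ 2 * cosh y ^ 2 - 1)) := key
    _ = φ c y := by rw [φ]; ring

lemma φ_strictMono (c : ℝ) (hc : 1 < c) : StrictMono (φ c) :=
  strictMono_of_odd_strictMonoOn_nonneg (φ_odd c) (φ_strictMonoOn c hc)

lemma F_strictMono (c A B : ℝ) (hc : 1 < c) (hAB : A < B) :
    StrictMono (fun σ => g c (σ - A) - g c (σ - B)) := by
  apply strictMono_of_deriv_pos
  intro σ
  have hF : HasDerivAt (fun σ => g c (σ - A) - g c (σ - B)) (φ c (σ - A) - φ c (σ - B)) σ := by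
    have h1 : HasDerivAt (fun σ : ℝ => g c (σ - A)) (φ c (σ - A)) σ := by
      have := (g_hasDerivAt c hc (σ - A)).comp σ ((hasDerivAt_id σ).sub_const A)
      simpa [Function.comp_def] using this
    have h2 : HasDerivAt (fun σ : ℝ => g c (σ - B)) (φ c (σ - B)) σ := by
      have := (g_hasDerivAt c hc (σ - B)).comp σ ((hasDerivAt_id σ).sub_const B)
      simpa [Function.comp_def] using this
    exact h1.sub h2
  rw [hF.deriv]
  have := φ_strictMono c hc (show σ - B < σ - A by linarith)
  linarith

lemma F_injective (c A B : ℝ) (hc : 1 ≤ c) (hAB : A ≠ B) :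
    Function.Injective (fun σ => g c (σ - A) - g c (σ - B)) := by
  rcases eq_or_lt_of_le hc with hc1 | hc1
  · -- c = 1 : g 1 x = x ^ 2
    have hg : ∀ x : ℝ, g 1 x = x ^ 2 := by
      intro x
      have hch : cosh x = 2 * sinh (x / 2) ^ 2 + 1 := by
        have h1 := Real.cosh_sq (x / 2)
        have h2 := Real.cosh_two_mul (x / 2)
        rw [show 2 * (x / 2) = x by ring] at h2
        nlinarith
      have harg : (1 * cosh x - 1) / 2 = sinh (x / 2) ^ 2 := by rw [hch]; ring
      rw [g, harg, Real.sqrt_sq_eq_abs]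
      rcases le_or_gt 0 x with h | h
      · have hs : 0 ≤ sinh (x / 2) := by
          have := Real.sinh_le_sinh.2 (show (0:ℝ) ≤ x / 2 by linarith)
          simpa using this
        rw [abs_of_nonneg hs, Real.arsinh_sinh]; ring
      · have hs : sinh (x / 2) < 0 := by
          have := Real.sinh_lt_sinh.2 (show x / 2 < (0:ℝ) by linarith)
          simpa using this
        rw [abs_of_neg hs, ← Real.sinh_neg, Real.arsinh_sinh]; ring
    intro s s' h
    simp only [← hc1, hg] at h
    have key : 2 * (B - A) * (s - s') = 0 := by linear_combination h
    have hBA : B - A ≠ 0 := sub_ne_zero.2 (Ne.symm hAB)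
    have : s - s' = 0 := by
      rcases mul_eq_zero.1 key with h' | h'
      · exact absurd h' (by simp [hBA])
      · exact h'
    linarith
  · intro s s' h
    rcases hAB.lt_or_gt with hlt | hlt
    · exact (F_strictMono c A B hc1 hlt).injective h
    · have h' : g c (s - B) - g c (s - A) = g c (s' - B) - g c (s' - A) := by
        simp only at h; linarith
      exact (F_strictMono c B A hc1 hlt).injective h'


lemma dist_ptI (κ : ℝ) (w : UpperHalfPlane) (hw : w.re = κ * w.im) (a : ℝ) (ha : 0 < a) :
    dist w (ptI a ha) =
      2 * arsinh (√((√(1 + κ ^ 2) * cosh (Real.log (√(1 + κ ^ 2) * w.im) - Real.log a) - 1) / 2)) := by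
  set c : ℝ := √(1 + κ ^ 2) with hcdef
  have hc : 0 < c := Real.sqrt_pos.2 (by positivity)
  have hc2 : c ^ 2 = 1 + κ ^ 2 := Real.sq_sqrt (by positivity)
  have ht : 0 < w.im := w.im_pos
  have hcta : 0 < c * w.im / a := by positivity
  have him : (ptI a ha).im = a := by simp [ptI, UpperHalfPlane.im]
  rw [UpperHalfPlane.dist_eq, him]
  congr 1
  have hlog : Real.log (c * w.im) - Real.log a = Real.log (c * w.im / a) :=
    (Real.log_div (by positivity) ha.ne').symm
  rw [hlog, Real.cosh_log hcta]
  have hd2 : dist (w : ℂ) ((ptI a ha : ℍ) : ℂ) ^ 2 = κ ^ 2 * w.im ^ 2 + (w.im - a) ^ 2 := by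
    rw [Complex.dist_eq_re_im, Real.sq_sqrt (by positivity)]
    have h1 : ((ptI a ha : ℍ) : ℂ).re = 0 := by simp [ptI]
    have h2 : ((ptI a ha : ℍ) : ℂ).im = a := by simp [ptI]
    rw [h1, h2]
    have : (w : ℂ).re = κ * w.im := hw
    rw [this]
    simp only [UpperHalfPlane.coe_im]
    ring
  have key : (c * ((c * w.im / a + (c * w.im / a)⁻¹) / 2) - 1) / 2
      = (dist (w : ℂ) ((ptI a ha : ℍ) : ℂ) / (2 * √(w.im * a))) ^ 2 := by
    rw [div_pow, hd2]
    have hsq : (2 * √(w.im * a)) ^ 2 = 4 * (w.im * a) := by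
      rw [mul_pow, Real.sq_sqrt (by positivity)]; norm_num
    rw [hsq]
    field_simp
    linear_combination (4 * w.im ^ 2) * hc2
  rw [key, Real.sqrt_sq (by positivity)]


end RayHyp

open Real in
/-- A Euclidean ray `Re(w) = κ·Im(w)` through the origin meets a square hyperbola
`S_m(aI, bI)` in at most one point. -/
theorem ray_meets_squareHyperbola_once (a b : ℝ) (ha : 0 < a) (hb : 0 < b)
    (hab : a ≠ b) (m κ : ℝ) (w w' : UpperHalfPlane)
    (hw : w.re = κ * w.im) (hw' : w'.re = κ * w'.im)
    (hSw : dist w (ptI a ha) ^ 2 - dist w (ptI b hb) ^ 2 = m)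
    (hSw' : dist w' (ptI a ha) ^ 2 - dist w' (ptI b hb) ^ 2 = m) :
    w = w' := by
  set c : ℝ := √(1 + κ ^ 2) with hcdef
  have hc1 : (1:ℝ) ≤ c := by
    calc (1:ℝ) = √1 := Real.sqrt_one.symm
      _ ≤ √(1 + κ ^ 2) := Real.sqrt_le_sqrt (by nlinarith)
  have hcpos : 0 < c := lt_of_lt_of_le one_pos hc1
  have hA : Real.log a ≠ Real.log b := by
    intro h
    apply hab
    have := congrArg Real.exp h
    rwa [Real.exp_log ha, Real.exp_log hb] at this
  have e1 : dist w (ptI a ha) ^ 2 = RayHyp.g c (Real.log (c * w.im) - Real.log a) := by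
    rw [RayHyp.dist_ptI κ w hw a ha, RayHyp.g]
  have e2 : dist w (ptI b hb) ^ 2 = RayHyp.g c (Real.log (c * w.im) - Real.log b) := by
    rw [RayHyp.dist_ptI κ w hw b hb, RayHyp.g]
  have e1' : dist w' (ptI a ha) ^ 2 = RayHyp.g c (Real.log (c * w'.im) - Real.log a) := by
    rw [RayHyp.dist_ptI κ w' hw' a ha, RayHyp.g]
  have e2' : dist w' (ptI b hb) ^ 2 = RayHyp.g c (Real.log (c * w'.im) - Real.log b) := by
    rw [RayHyp.dist_ptI κ w' hw' b hb, RayHyp.g]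
  have hFeq : (fun σ => RayHyp.g c (σ - Real.log a) - RayHyp.g c (σ - Real.log b))
        (Real.log (c * w.im))
      = (fun σ => RayHyp.g c (σ - Real.log a) - RayHyp.g c (σ - Real.log b))
        (Real.log (c * w'.im)) := by
    simp only
    rw [← e1, ← e2, ← e1', ← e2', hSw, hSw']
  have hlog : Real.log (c * w.im) = Real.log (c * w'.im) :=
    RayHyp.F_injective c (Real.log a) (Real.log b) hc1 hA hFeq
  have himpos : 0 < c * w.im := by have := w.im_pos; positivity
  have himpos' : 0 < c * w'.im := by have := w'.im_pos; positivity
  have hcim : c * w.im = c * w'.im := by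
    have := congrArg Real.exp hlog
    rwa [Real.exp_log himpos, Real.exp_log himpos'] at this
  have him : w.im = w'.im := mul_left_cancel₀ hcpos.ne' hcim
  have hre : w.re = w'.re := by rw [hw, hw', him]
  exact UpperHalfPlane.ext' hre him
end
end

section
/- Let λ > 0 with λ ≠ 1, let c > 0, and let m ∈ ℝ. Then there is no point w of the upper half-plane H² such that both w and λ·w (the point with complex coordinate λ times that of w, which again lies in H²) belong to the square hyperbola S_m(λcI, cI); that is, one cannot have both d(w, λcI)² − d(w, cI)² = m and d(λ·w, λcI)² − d(λ·w, cI)² = m. -/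
open UpperHalfPlane

noncomputable section

/-- Scaling a point of the upper half-plane by a positive real `λ`. -/
def scalePt (l : ℝ) (hl : 0 < l) (w : UpperHalfPlane) : UpperHalfPlane :=
  ⟨(l : ℂ) * (w : ℂ), by
    rw [Complex.mul_im]
    simpa using mul_pos hl w.im_pos⟩

lemma aux_pos (U U1 S : ℝ) (hS : 0 < S) (hSS : S * S = U + U ^ 2)
    (hP : 0 < 2 * (U + 1 / 2) * (U + U ^ 2) - U1 ^ 2 * (1 + 2 * U)) :
    0 < (U + 1 / 2) * S - U1 * (1 / (2 * S) * (U1 + 2 * U * U1)) := by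
  have h : (U + 1 / 2) * S - U1 * (1 / (2 * S) * (U1 + 2 * U * U1))
      = (2 * (U + 1 / 2) * (U + U ^ 2) - U1 ^ 2 * (1 + 2 * U)) / (2 * S) := by
    rw [eq_div_iff (by positivity)]
    field_simp
    linear_combination (2 * U + 1) * hSS
  rw [h]
  exact div_pos hP (by positivity)

lemma strictConv_aux (C y : ℝ) (hy : 0 < y) (hC : y ^ 2 < C) :
    StrictConvexOn ℝ Set.univ
      (fun s => 2 * Real.arsinh (Real.sqrt (C * Real.exp (-s) / (4 * y) + Real.exp s / (4 * y) - 1 / 2))) := by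
  set u : ℝ → ℝ := fun s => C * Real.exp (-s) / (4 * y) + Real.exp s / (4 * y) - 1 / 2 with hu_def
  set u1 : ℝ → ℝ := fun s => Real.exp s / (4 * y) - C * Real.exp (-s) / (4 * y) with hu1_def
  set v : ℝ → ℝ := fun s => u s + u s ^ 2 with hv_def
  have hCpos : 0 < C := lt_trans (by positivity) hC
  have hu0 : ∀ s, 0 < u s := by
    intro s
    have h1 : Real.exp (-s) * Real.exp s = 1 := by rw [← Real.exp_add]; simp
    have key : u s = (C - y ^ 2 + (y - Real.exp s) ^ 2) * (Real.exp (-s) / (4 * y)) := by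
      simp only [hu_def]
      rw [Real.exp_neg]
      field_simp
      ring
    rw [key]
    have : 0 < C - y ^ 2 + (y - Real.exp s) ^ 2 := by nlinarith [sq_nonneg (y - Real.exp s)]
    positivity
  have hv0 : ∀ s, 0 < v s := by
    intro s; have := hu0 s; simp only [hv_def]; positivity
  have hexp : ∀ s : ℝ, HasDerivAt (fun t => Real.exp (-t)) (-Real.exp (-s)) s := fun s => by
    exact ((Real.hasDerivAt_exp (-s)).comp s (hasDerivAt_neg s)).congr_deriv (by ring)
  have hu : ∀ s, HasDerivAt u (u1 s) s := by
    intro s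
    have h := ((((hexp s).const_mul C).div_const (4 * y)).add
      ((Real.hasDerivAt_exp s).div_const (4 * y))).sub_const (1 / 2)
    refine h.congr_deriv ?_
    simp only [hu1_def]; ring
  have hu1 : ∀ s, HasDerivAt u1 (u s + 1 / 2) s := by
    intro s
    have h := (((Real.hasDerivAt_exp s).div_const (4 * y)).sub
      (((hexp s).const_mul C).div_const (4 * y)))
    refine h.congr_deriv ?_
    simp only [hu_def]; ring
  have hv : ∀ s, HasDerivAt v (u1 s + 2 * u s * u1 s) s := by
    intro s
    have h := (hu s).add (((hu s).pow 2))
    refine h.congr_deriv ?_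
    ring
  have hsqv : ∀ s, HasDerivAt (fun t => Real.sqrt (v t)) (1 / (2 * Real.sqrt (v s)) * (u1 s + 2 * u s * u1 s)) s :=
    fun s => (Real.hasDerivAt_sqrt (hv0 s).ne').comp s (hv s)
  set φ : ℝ → ℝ := fun s => u1 s / Real.sqrt (v s) with hφ_def
  -- first derivative
  have hg : ∀ s, HasDerivAt (fun t => 2 * Real.arsinh (Real.sqrt (u t))) (φ s) s := by
    intro s
    have hsqu : HasDerivAt (fun t => Real.sqrt (u t)) (1 / (2 * Real.sqrt (u s)) * u1 s) s :=
      (Real.hasDerivAt_sqrt (hu0 s).ne').comp s (hu s)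
    have harc := ((Real.hasDerivAt_arsinh (Real.sqrt (u s))).comp s hsqu).const_mul 2
    refine harc.congr_deriv ?_
    have h1 : Real.sqrt (u s) ^ 2 = u s := Real.sq_sqrt (hu0 s).le
    have h2 : Real.sqrt (v s) = Real.sqrt (u s) * Real.sqrt (1 + u s) := by
      rw [← Real.sqrt_mul (hu0 s).le]
      congr 1
      simp only [hv_def]; ring
    have hsu : 0 < Real.sqrt (u s) := Real.sqrt_pos.2 (hu0 s)
    have hs1u : 0 < Real.sqrt (1 + u s) := Real.sqrt_pos.2 (by have := hu0 s; linarith)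
    rw [hφ_def]
    simp only [h1, h2]
    field_simp
  -- second derivative positivity
  have hφ : ∀ s, 0 < ((u s + 1 / 2) * Real.sqrt (v s)
        - u1 s * (1 / (2 * Real.sqrt (v s)) * (u1 s + 2 * u s * u1 s))) / Real.sqrt (v s) ^ 2 ∧
      HasDerivAt φ (((u s + 1 / 2) * Real.sqrt (v s)
        - u1 s * (1 / (2 * Real.sqrt (v s)) * (u1 s + 2 * u s * u1 s))) / Real.sqrt (v s) ^ 2) s := by
    intro s
    have hsv : 0 < Real.sqrt (v s) := Real.sqrt_pos.2 (hv0 s)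
    constructor
    · have hmul : Real.sqrt (v s) * Real.sqrt (v s) = v s := Real.mul_self_sqrt (hv0 s).le
      set a : ℝ := C * Real.exp (-s) / (4 * y) with ha_def
      set b : ℝ := Real.exp s / (4 * y) with hb_def
      have ha : 0 < a := by rw [ha_def]; positivity
      have hb : 0 < b := by rw [hb_def]; positivity
      have hab : a * b = C / (16 * y ^ 2) := by
        rw [ha_def, hb_def]
        rw [Real.exp_neg]
        field_simp
        ring
      have hP : 0 < 2 * (u s + 1 / 2) * v s - u1 s ^ 2 * (1 + 2 * u s) := by
        have hps : u s = a + b - 1 / 2 := by simp only [hu_def, ha_def, hb_def]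
        have hps1 : u1 s = b - a := by simp only [hu1_def, ha_def, hb_def]
        have hid : 2 * (u s + 1 / 2) * v s - u1 s ^ 2 * (1 + 2 * u s)
            = 2 * (a + b) * (4 * (a * b) - 1 / 4) := by
          simp only [hv_def, hps, hps1]; ring
        rw [hid, hab]
        have h4 : 0 < 4 * (C / (16 * y ^ 2)) - 1 / 4 := by
          have : 4 * (C / (16 * y ^ 2)) - 1 / 4 = (C - y ^ 2) / (4 * y ^ 2) := by
            field_simp; ring
          rw [this]
          apply div_pos (by linarith) (by positivity)
        positivity
      have hN : 0 < (u s + 1 / 2) * Real.sqrt (v s)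
          - u1 s * (1 / (2 * Real.sqrt (v s)) * (u1 s + 2 * u s * u1 s)) := by
        apply aux_pos _ _ _ hsv
        · rw [hmul]
        · have : v s = u s + u s ^ 2 := by simp only [hv_def]
          rw [← this]; exact hP
      exact div_pos hN (by positivity)
    · exact (hu1 s).div (hsqv s) hsv.ne'
  -- assemble
  have hderiv : deriv (fun t => 2 * Real.arsinh (Real.sqrt (u t))) = φ := funext fun s => (hg s).deriv
  apply strictConvexOn_univ_of_deriv2_pos
  · exact Differentiable.continuous fun s => (hg s).differentiableAt
  · intro s
    have h2 : deriv^[2] (fun t => 2 * Real.arsinh (Real.sqrt (u t))) s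
        = deriv (deriv (fun t => 2 * Real.arsinh (Real.sqrt (u t)))) s := by
      simp [Function.iterate_succ, Function.iterate_one]
    rw [h2, hderiv, (hφ s).2.deriv]
    exact (hφ s).1

lemma dist_ptI (w : ℍ) (a : ℝ) (ha : 0 < a) :
    dist w (ptI a ha) = 2 * Real.arsinh (Real.sqrt ((w.re ^ 2 + (w.im - a) ^ 2) / (4 * w.im * a))) := by
  have hy := w.im_pos
  rw [UpperHalfPlane.dist_eq]
  congr 1
  have h1 : dist (w : ℂ) ((ptI a ha : ℍ) : ℂ) = Real.sqrt (w.re ^ 2 + (w.im - a) ^ 2) := by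
    rw [Complex.dist_eq_re_im]
    have : ((ptI a ha : ℍ) : ℂ) = a * Complex.I := rfl
    rw [this]
    norm_num
  have h2 : (ptI a ha).im = a := by simp [ptI, UpperHalfPlane.im]
  rw [h1, h2]
  rw [show (4 * w.im * a) = (2 * Real.sqrt (w.im * a))^2 by
        rw [mul_pow, Real.sq_sqrt (by positivity)]; ring,
      Real.sqrt_div (by positivity), Real.sqrt_sq (by positivity)]

/-- For `λ > 0`, `λ ≠ 1`, `c > 0` and `m ∈ ℝ`, no point `w ∈ ℍ` is such that both `w`
and `λ·w` lie on the square hyperbola `S_m(λcI, cI)`. -/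
theorem no_two_points_of_ray_orbit_on_squareHyperbola
    (l c m : ℝ) (hl : 0 < l) (hl1 : l ≠ 1) (hc : 0 < c) :
    ¬ ∃ w : UpperHalfPlane,
        dist w (ptI (l * c) (mul_pos hl hc)) ^ 2 - dist w (ptI c hc) ^ 2 = m ∧
        dist (scalePt l hl w) (ptI (l * c) (mul_pos hl hc)) ^ 2
          - dist (scalePt l hl w) (ptI c hc) ^ 2 = m := by
  rintro ⟨w, h1, h2⟩
  have hy : 0 < w.im := w.im_pos
  have hL : Real.log l ≠ 0 := fun h => hl1 (by rw [← Real.exp_log hl, h, Real.exp_zero])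
  have hre : (scalePt l hl w).re = l * w.re := by
    have h : (scalePt l hl w).re = ((l : ℂ) * (w : ℂ)).re := rfl
    rw [h, Complex.mul_re]
    simp
  have him : (scalePt l hl w).im = l * w.im := by
    have h : (scalePt l hl w).im = ((l : ℂ) * (w : ℂ)).im := rfl
    rw [h, Complex.mul_im]
    simp
  have hpre : ∀ (a : ℝ) (ha : 0 < a), (ptI a ha).re = 0 := by
    intro a ha; simp [ptI, UpperHalfPlane.re]
  have hpim : ∀ (a : ℝ) (ha : 0 < a), (ptI a ha).im = a := by
    intro a ha; simp [ptI, UpperHalfPlane.im]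
  by_cases hx : w.re = 0
  · -- vertical line case: explicit log computation
    have d1 : ∀ (a : ℝ) (ha : 0 < a), dist w (ptI a ha) = |Real.log w.im - Real.log a| := by
      intro a ha
      rw [UpperHalfPlane.dist_of_re_eq (by rw [hx, hpre a ha]), hpim, Real.dist_eq]
    have d2 : ∀ (a : ℝ) (ha : 0 < a),
        dist (scalePt l hl w) (ptI a ha) = |Real.log l + Real.log w.im - Real.log a| := by
      intro a ha
      rw [UpperHalfPlane.dist_of_re_eq (by rw [hre, hx, mul_zero, hpre a ha]), hpim, him,
        Real.dist_eq, Real.log_mul hl.ne' hy.ne']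
    rw [d1 _ _, d1 _ _, Real.log_mul hl.ne' hc.ne'] at h1
    rw [d2 _ _, d2 _ _, Real.log_mul hl.ne' hc.ne'] at h2
    rw [sq_abs, sq_abs] at h1 h2
    have hL2 : 0 < Real.log l ^ 2 := by
      rcases lt_or_gt_of_ne hL with h | h <;> nlinarith
    nlinarith [h1, h2, hL2]
  · -- generic case: strict convexity
    set g : ℝ → ℝ := fun s =>
      2 * Real.arsinh (Real.sqrt ((w.re ^ 2 + w.im ^ 2) * Real.exp (-s) / (4 * w.im)
        + Real.exp s / (4 * w.im) - 1 / 2)) with hg_def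
    have key : ∀ (a : ℝ) (ha : 0 < a), dist w (ptI a ha) = g (Real.log a) := by
      intro a ha
      rw [dist_ptI, hg_def]
      congr 3
      rw [Real.exp_log ha, Real.exp_neg, Real.exp_log ha]
      field_simp
      ring
    have key' : ∀ (a : ℝ) (ha : 0 < a),
        dist (scalePt l hl w) (ptI a ha) = g (Real.log a - Real.log l) := by
      intro a ha
      rw [dist_ptI, hre, him, hg_def]
      congr 3
      rw [show -(Real.log a - Real.log l) = Real.log l - Real.log a by ring,
        Real.exp_sub, Real.exp_sub, Real.exp_log ha, Real.exp_log hl]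
      field_simp
      ring
    rw [key _ _, key _ _, Real.log_mul hl.ne' hc.ne'] at h1
    rw [key' _ _, key' _ _, Real.log_mul hl.ne' hc.ne'] at h2
    have e1 : Real.log l + Real.log c - Real.log l = Real.log c := by ring
    rw [e1] at h2
    -- strict convexity
    have hx2 : 0 < w.re ^ 2 := by rcases lt_or_gt_of_ne hx with h | h <;> nlinarith
    have sc := strictConv_aux (w.re ^ 2 + w.im ^ 2) w.im hy (by linarith)
    set p := Real.log c
    set L := Real.log l
    have hne : p + L ≠ p - L := fun h => hL (by dsimp only [L] at *; linarith)
    have hmid := sc.2 (Set.mem_univ (p + L)) (Set.mem_univ (p - L)) hne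
      (by norm_num : (0:ℝ) < 1/2) (by norm_num : (0:ℝ) < 1/2) (by norm_num)
    simp only [smul_eq_mul] at hmid
    rw [show (1/2 : ℝ) * (p + L) + (1/2 : ℝ) * (p - L) = p by ring] at hmid
    have hgn : ∀ s, 0 ≤ g s := by
      intro s
      rw [hg_def]
      have := Real.sqrt_nonneg ((w.re ^ 2 + w.im ^ 2) * Real.exp (-s) / (4 * w.im)
        + Real.exp s / (4 * w.im) - 1 / 2)
      have harsinh := Real.arsinh_nonneg_iff.2 this
      linarith
    have hA : g (Real.log l + Real.log c) = g (p + L) := by rw [add_comm]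
    rw [hA] at h1
    have hmid' : g p < 1/2 * g (p + L) + 1/2 * g (p - L) := hmid
    nlinarith [hmid', hgn p, hgn (p + L), hgn (p - L), sq_nonneg (g (p + L) - g (p - L)), h1, h2]
end
end
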